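/- Let N ∈ ℂ^{d×d} be lower Hessenberg with N_{k,k+1} ≠ 0 for all k = 1,…,d−1, let w ∈ ℂ^d, and let (λ, y) with y = (η₁,…,η_d)^T, ‖y‖ = 1, be an eigenpair of N̂ := N + e_d w^*, i.e., N̂ y = λ y. Then for every k = 1,…,d−1, |η_{k+1}| ≤ (|N_{k,k} − λ| / |N_{k,k+1}|) · |η_k| + ‖N_{k,1:k−1}‖ / |N_{k,k+1}|, where N_{k,1:k−1} denotes the vector (N_{k,1},…,N_{k,k−1}) (empty, with norm 0, when k = 1). -/

import Mathlib

open Matrix Finset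

/-- Euclidean norm of a vector in `ℂ^m`. -/
noncomputable def eunormC {m : ℕ} (v : Fin m → ℂ) : ℝ :=
  Real.sqrt (∑ i, ‖v i‖ ^ 2)

/-- **Remark 6.1, first bound.**  Let `N` be lower Hessenberg with nonzero
superdiagonal, and let `(λ, y)`, `‖y‖ = 1`, be an eigenpair of `N̂ = N + e_d w*`.
Then for `k = 1, …, d-1`,
`|η_{k+1}| ≤ (|N_{k,k} - λ|/|N_{k,k+1}|) |η_k| + ‖N_{k,1:k-1}‖ / |N_{k,k+1}|`.
(The paper's `d` is written as `d+1`; `k.castSucc` plays the role of `k` and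
`k.succ` that of `k+1`.) -/
theorem eigenvector_component_growth
    {d : ℕ}
    (N : Matrix (Fin (d + 1)) (Fin (d + 1)) ℂ)
    (hHess : ∀ i j : Fin (d + 1), (i : ℕ) + 1 < (j : ℕ) → N i j = 0)
    (hsuper : ∀ k : Fin d, N k.castSucc k.succ ≠ 0)
    (w : Fin (d + 1) → ℂ)
    (lam : ℂ) (y : Fin (d + 1) → ℂ)
    (hynorm : eunormC y = 1)
    (heig : (N + vecMulVec (Pi.single (Fin.last d) 1 : Fin (d + 1) → ℂ) (star w)).mulVec y
      = lam • y) :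
    ∀ k : Fin d,
      ‖y k.succ‖ ≤
        ‖N k.castSucc k.castSucc - lam‖ / ‖N k.castSucc k.succ‖
            * ‖y k.castSucc‖
          + Real.sqrt (∑ j ∈ univ.filter (fun j : Fin (d + 1) => j < k.castSucc),
                ‖N k.castSucc j‖ ^ 2)
              / ‖N k.castSucc k.succ‖ := by
  intro k
  set c := N k.castSucc k.succ with hc
  have hcpos : 0 < ‖c‖ := norm_pos_iff.mpr (hsuper k)
  have hne : (k.castSucc : Fin (d + 1)) ≠ Fin.last d :=
    (Fin.castSucc_lt_last k).ne
  -- the row equation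
  have hrow : (∑ j, N k.castSucc j * y j) = lam * y k.castSucc := by
    have h := congrFun heig k.castSucc
    simpa [Matrix.add_mulVec, Matrix.mulVec, dotProduct, vecMulVec,
      Pi.single_eq_of_ne hne] using h
  set F := univ.filter (fun j : Fin (d + 1) => j < k.castSucc) with hF
  set S := ∑ j ∈ F, N k.castSucc j * y j with hS
  have hsplit : (∑ j, N k.castSucc j * y j)
      = S + N k.castSucc k.castSucc * y k.castSucc + c * y k.succ := by
    have hlt : (k.castSucc : Fin (d + 1)) < k.succ := Fin.castSucc_lt_succ
    have hcs : k.castSucc ∉ insert (k.succ : Fin (d + 1)) F := by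
      simp only [mem_insert, hF, mem_filter, mem_univ, true_and, not_or]
      exact ⟨Fin.ne_of_lt hlt, lt_irrefl _⟩
    have hsc : (k.succ : Fin (d + 1)) ∉ F := by
      simp only [hF, mem_filter, mem_univ, true_and]
      exact fun h => absurd (h.trans hlt) (lt_irrefl _)
    have hsub : insert k.castSucc (insert (k.succ : Fin (d + 1)) F) ⊆ univ :=
      subset_univ _
    rw [← Finset.sum_subset hsub]
    · rw [Finset.sum_insert hcs, Finset.sum_insert hsc]
      ring
    · intro j _ hj
      simp only [mem_insert, hF, mem_filter, mem_univ, true_and, not_or] at hj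
      obtain ⟨h1, h2, h3⟩ := hj
      have : (k : ℕ) + 1 < (j : ℕ) := by
        simp only [Fin.lt_iff_val_lt_val, Fin.coe_castSucc, Fin.ext_iff,
          Fin.val_succ] at h1 h2 h3 ⊢
        omega
      rw [hHess _ _ (by simpa using this), zero_mul]
  have hkey : c * y k.succ = (lam - N k.castSucc k.castSucc) * y k.castSucc - S := by
    rw [hsplit] at hrow
    linear_combination hrow
  -- norm of y
  have hy1 : (∑ i, ‖y i‖ ^ 2) = 1 := by
    have h0 : (0:ℝ) ≤ ∑ i, ‖y i‖ ^ 2 :=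
      Finset.sum_nonneg fun i _ => sq_nonneg _
    have := hynorm
    unfold eunormC at this
    nlinarith [Real.sq_sqrt h0]
  -- Cauchy-Schwarz bound on S
  have hSbound : ‖S‖ ≤ Real.sqrt (∑ j ∈ F, ‖N k.castSucc j‖ ^ 2) := by
    have h1 : ‖S‖ ≤ ∑ j ∈ F, ‖N k.castSucc j‖ * ‖y j‖ := by
      refine (norm_sum_le _ _).trans ?_
      exact le_of_eq (Finset.sum_congr rfl fun j _ => norm_mul _ _)
    have h2 : (∑ j ∈ F, ‖N k.castSucc j‖ * ‖y j‖) ^ 2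
        ≤ (∑ j ∈ F, ‖N k.castSucc j‖ ^ 2) * ∑ j ∈ F, ‖y j‖ ^ 2 :=
      Finset.sum_mul_sq_le_sq_mul_sq F _ _
    have hy2 : (∑ j ∈ F, ‖y j‖ ^ 2) ≤ 1 := by
      rw [← hy1]
      exact Finset.sum_le_sum_of_subset_of_nonneg (subset_univ _)
        (fun i _ _ => sq_nonneg _)
    have hNnn : (0:ℝ) ≤ ∑ j ∈ F, ‖N k.castSucc j‖ ^ 2 :=
      Finset.sum_nonneg fun i _ => sq_nonneg _
    have hsum_nn : (0:ℝ) ≤ ∑ j ∈ F, ‖N k.castSucc j‖ * ‖y j‖ :=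
      Finset.sum_nonneg fun i _ => mul_nonneg (norm_nonneg _) (norm_nonneg _)
    have h3 : (∑ j ∈ F, ‖N k.castSucc j‖ * ‖y j‖) ^ 2
        ≤ ∑ j ∈ F, ‖N k.castSucc j‖ ^ 2 := by
      calc _ ≤ (∑ j ∈ F, ‖N k.castSucc j‖ ^ 2) * ∑ j ∈ F, ‖y j‖ ^ 2 := h2
        _ ≤ (∑ j ∈ F, ‖N k.castSucc j‖ ^ 2) * 1 := by
            exact mul_le_mul_of_nonneg_left hy2 hNnn
        _ = _ := mul_one _
    have h4 : (∑ j ∈ F, ‖N k.castSucc j‖ * ‖y j‖)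
        ≤ Real.sqrt (∑ j ∈ F, ‖N k.castSucc j‖ ^ 2) := by
      rw [← Real.sqrt_sq hsum_nn]
      exact Real.sqrt_le_sqrt h3
    exact h1.trans h4
  -- main estimate
  have hmain : ‖c‖ * ‖y k.succ‖
      ≤ ‖N k.castSucc k.castSucc - lam‖ * ‖y k.castSucc‖
        + Real.sqrt (∑ j ∈ F, ‖N k.castSucc j‖ ^ 2) := by
    calc ‖c‖ * ‖y k.succ‖
        = ‖(lam - N k.castSucc k.castSucc) * y k.castSucc - S‖ := by
          rw [← norm_mul, hkey]
      _ ≤ ‖(lam - N k.castSucc k.castSucc) * y k.castSucc‖ + ‖S‖ :=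
          norm_sub_le _ _
      _ = ‖N k.castSucc k.castSucc - lam‖ * ‖y k.castSucc‖
            + ‖S‖ := by
          rw [norm_mul, ← norm_neg (lam - _), neg_sub]
      _ ≤ _ := by linarith
  rw [div_mul_eq_mul_div, ← add_div, le_div_iff₀ hcpos]
  linarith [hmain]
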